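/- Let f_1,…,f_k : 2^V → ℝ≥0 be monotone submodular with f_i(∅) = 0, M = (V,I) a matroid, and OPT = max_{S∈I} min_i f_i(S). Let γ satisfy (1 − ε/2)·OPT ≤ γ ≤ OPT, and define g^γ(S) = (1/k)Σ_i min{f_i(S), γ}. If S^alg ⊆ V satisfies g^γ(S^alg) ≥ (1 − ε/(2k))·max_{S∈I} g^γ(S), then f_i(S^alg) ≥ (1 − ε)·OPT for all i ∈ [k]. -/

import Mathlib

/-- Bi-criteria guarantee: if `γ` estimates `OPT` up to factor `1 - ε/2` and `S^alg`
nearly maximizes `g^γ` over `I`, then `fᵢ(S^alg) ≥ (1-ε)·OPT` for all `i`. -/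
theorem bicriteria_robust_guarantee
    {V : Type*} [DecidableEq V] {k : ℕ} (hk : 0 < k)
    (f : Fin k → Finset V → ℝ)
    (hnn : ∀ i S, 0 ≤ f i S)
    (hmono : ∀ i, ∀ A B : Finset V, A ⊆ B → f i A ≤ f i B)
    (hsub : ∀ i, ∀ (e : V) (A B : Finset V), A ⊆ B → e ∉ B →
      f i (insert e B) - f i B ≤ f i (insert e A) - f i A)
    (h0 : ∀ i, f i (∅ : Finset V) = 0)
    (Indep : Finset V → Prop)
    (hI_empty : Indep ∅)
    (hI_subset : ∀ A B : Finset V, Indep B → A ⊆ B → Indep A)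
    (hI_exchange : ∀ A B : Finset V, Indep A → Indep B → A.card < B.card →
      ∃ e ∈ B \ A, Indep (insert e A))
    (ε : ℝ) (hε0 : 0 < ε) (hε1 : ε < 1)
    (Sstar : Finset V) (hSstar : Indep Sstar)
    (hopt : ∀ S : Finset V, Indep S →
      (Finset.univ.inf' (Finset.univ_nonempty_iff.2 ⟨⟨0, hk⟩⟩) fun i => f i S) ≤
      (Finset.univ.inf' (Finset.univ_nonempty_iff.2 ⟨⟨0, hk⟩⟩) fun i => f i Sstar))
    (OPT : ℝ)
    (hOPT : OPT = Finset.univ.inf' (Finset.univ_nonempty_iff.2 ⟨⟨0, hk⟩⟩)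
      fun i => f i Sstar)
    (γ : ℝ) (hγ₁ : (1 - ε / 2) * OPT ≤ γ) (hγ₂ : γ ≤ OPT)
    (gγ : Finset V → ℝ)
    (hgγ : ∀ S, gγ S = (1 / (k : ℝ)) * ∑ i, min (f i S) γ)
    (Salg : Finset V)
    (hSalg : ∀ S : Finset V, Indep S → (1 - ε / (2 * k)) * gγ S ≤ gγ Salg) :
    ∀ i : Fin k, (1 - ε) * OPT ≤ f i Salg := by
  intro i
  have hkR : (0 : ℝ) < k := by exact_mod_cast hk
  have hOPTnn : 0 ≤ OPT := by
    rw [hOPT]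
    exact Finset.le_inf' _ _ (fun j _ => hnn j Sstar)
  have hγnn : 0 ≤ γ := le_trans (by nlinarith) hγ₁
  have hγstar : ∀ j : Fin k, γ ≤ f j Sstar := fun j =>
    hγ₂.trans (hOPT ▸ Finset.inf'_le _ (Finset.mem_univ j))
  have hgstar : gγ Sstar = γ := by
    rw [hgγ]
    have : ∀ j : Fin k, min (f j Sstar) γ = γ := fun j => min_eq_right (hγstar j)
    rw [Finset.sum_congr rfl (fun j _ => this j), Finset.sum_const, Finset.card_univ,
      Fintype.card_fin, nsmul_eq_mul]
    field_simp
  have hlow : (1 - ε / (2 * k)) * γ ≤ gγ Salg := by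
    have := hSalg Sstar hSstar
    rwa [hgstar] at this
  -- bound the sum
  have hsumle : ∑ j, min (f j Salg) γ ≤ min (f i Salg) γ + (k - 1 : ℝ) * γ := by
    rw [← Finset.add_sum_erase _ _ (Finset.mem_univ i)]
    have h1 : ∑ j ∈ Finset.univ.erase i, min (f j Salg) γ ≤
        (Finset.univ.erase i).card • γ :=
      Finset.sum_le_card_nsmul _ _ _ (fun j _ => min_le_right _ _)
    have hc : (Finset.univ.erase i).card = k - 1 := by
      rw [Finset.card_erase_of_mem (Finset.mem_univ i), Finset.card_univ, Fintype.card_fin]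
    rw [hc, nsmul_eq_mul] at h1
    have hcast : ((k - 1 : ℕ) : ℝ) = (k : ℝ) - 1 := by
      rw [Nat.cast_sub hk]; norm_num
    rw [hcast] at h1
    linarith
  have hmin : (1 - ε / 2) * γ ≤ min (f i Salg) γ := by
    rw [hgγ] at hlow
    have h2 : (1 - ε / (2 * k)) * γ ≤ (1 / (k : ℝ)) * (min (f i Salg) γ + (k - 1 : ℝ) * γ) := by
      calc (1 - ε / (2 * k)) * γ ≤ (1 / (k : ℝ)) * ∑ j, min (f j Salg) γ := hlow
        _ ≤ _ := by
            apply mul_le_mul_of_nonneg_left hsumle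
            positivity
    have hk0 : (k : ℝ) ≠ 0 := ne_of_gt hkR
    field_simp at h2
    nlinarith [h2]
  have hfi : (1 - ε / 2) * γ ≤ f i Salg := hmin.trans (min_le_left _ _)
  nlinarith [mul_le_mul_of_nonneg_left hγ₁ (by linarith : (0:ℝ) ≤ 1 - ε / 2)]
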